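/- Let G be a finite group, N ≤ G a subgroup of index 2, and I a finite G-set of odd cardinality r with r′ orbits, such that N acts transitively on each G-orbit of I. Let M be the G-lattice with ℤ-basis {e_i : i ∈ I} ∪ {f} and G-action given by: for σ ∈ N, σ·e_i = e_{σ·i} and σ·f = f; for σ ∈ G∖N, σ·e_i = −e_{σ·i} and σ·f = f − Σ_{i∈I} e_i. Then the first group cohomology H¹(G, M) is isomorphic as an abelian group to (ℤ/2ℤ)^{r′−1}. -/

import Mathlib

open groupCohomology MulAction

theorem h1_odd_case
    (G : Type) [Group G] [Fintype G] (N : Subgroup G) (hN : N.index = 2)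
    (I : Type) [Fintype I] [MulAction G I]
    (r r' : ℕ) (hr : Fintype.card I = r) (hodd : Odd r)
    (hr' : Nat.card (MulAction.orbitRel.Quotient G I) = r')
    (htrans : ∀ i j : I, j ∈ MulAction.orbit G i → ∃ σ ∈ N, σ • i = j)
    (ρ : Representation ℤ G ((I → ℤ) × ℤ))
    (hρN : ∀ σ ∈ N, ∀ (v : I → ℤ) (c : ℤ),
      ρ σ (v, c) = (fun j => v (σ⁻¹ • j), c))
    (hρ : ∀ σ ∉ N, ∀ (v : I → ℤ) (c : ℤ),
      ρ σ (v, c) = (fun j => -v (σ⁻¹ • j) - c, c)) :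
    Nonempty (groupCohomology.H1 (Rep.of ρ) ≃+ (Fin (r' - 1) → ZMod 2)) := by
  classical
  set Ω := MulAction.orbitRel.Quotient G I with hΩdef
  -- there is an element outside N
  obtain ⟨g₀, hg₀⟩ : ∃ g : G, g ∉ N := by
    by_contra hc
    push_neg at hc
    have : N = ⊤ := (Subgroup.eq_top_iff' N).mpr hc
    rw [this, Subgroup.index_top] at hN
    omega
  -- sign function
  set E : G → ℤ := fun σ => if σ ∈ N then 1 else -1 with hEdef
  have hmul2 : ∀ {a b : G}, a * b ∈ N ↔ (a ∈ N ↔ b ∈ N) :=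
    fun {a b} => Subgroup.mul_mem_iff_of_index_two hN
  have hE_mul : ∀ σ τ, E (σ * τ) = E σ * E τ := by
    intro σ τ
    by_cases hσ : σ ∈ N <;> by_cases hτ : τ ∈ N <;>
      simp [hEdef, hσ, hτ, hmul2]
  -- basic facts about ρ
  have hρ_snd : ∀ (σ : G) (x : (I → ℤ) × ℤ), (ρ σ x).2 = x.2 := by
    intro σ x
    by_cases hσ : σ ∈ N
    · calc (ρ σ x).2 = (ρ σ (x.1, x.2)).2 := rfl
        _ = x.2 := by rw [hρN σ hσ]
    · calc (ρ σ x).2 = (ρ σ (x.1, x.2)).2 := rfl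
        _ = x.2 := by rw [hρ σ hσ]
  have hfstN : ∀ σ ∈ N, ∀ (x : (I → ℤ) × ℤ) (j : I), (ρ σ x).1 j = x.1 (σ⁻¹ • j) := by
    intro σ hσ x j
    calc (ρ σ x).1 j = (ρ σ (x.1, x.2)).1 j := rfl
      _ = x.1 (σ⁻¹ • j) := by rw [hρN σ hσ]
  have hfstO : ∀ σ ∉ N, ∀ (x : (I → ℤ) × ℤ) (j : I),
      (ρ σ x).1 j = -x.1 (σ⁻¹ • j) - x.2 := by
    intro σ hσ x j
    calc (ρ σ x).1 j = (ρ σ (x.1, x.2)).1 j := rfl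
      _ = -x.1 (σ⁻¹ • j) - x.2 := by rw [hρ σ hσ]
  -- vanishing of additive ℤ-valued maps on multiplicatively closed sets
  have vanish : ∀ (c : G → ℤ) (S : Set G), (∀ a ∈ S, ∀ b ∈ S, a * b ∈ S) →
      (∀ a ∈ S, ∀ b ∈ S, c (a * b) = c a + c b) → ∀ g ∈ S, c g = 0 := by
    intro c S hmul hadd g hg
    have hpow : ∀ n : ℕ, g ^ (n + 1) ∈ S ∧ c (g ^ (n + 1)) = (n + 1 : ℤ) * c g := by
      intro n
      induction n with
      | zero => simpa using hg
      | succ n ih =>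
        refine ⟨by rw [pow_succ]; exact hmul _ ih.1 _ hg, ?_⟩
        rw [pow_succ, hadd _ ih.1 _ hg, ih.2]
        push_cast
        ring
    obtain ⟨n, hn⟩ : ∃ n, Fintype.card G = n + 1 :=
      ⟨Fintype.card G - 1, by have := Fintype.card_pos (α := G); omega⟩
    have hcard : g ^ Fintype.card G = 1 := pow_card_eq_one
    have h1S : (1 : G) ∈ S := by rw [← hcard, hn]; exact (hpow n).1
    have hc1 : c 1 = 0 := by have := hadd 1 h1S 1 h1S; simpa using this
    have h1 := (hpow n).2
    rw [← hn, hcard, hc1] at h1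
    have hne : ((n : ℤ) + 1) ≠ 0 := by positivity
    have := mul_eq_zero.mp h1.symm
    tauto
  -- cocycle condition as a predicate on raw functions
  set IsC : (G → (I → ℤ) × ℤ) → Prop :=
    fun f => ∀ g h : G, f (g * h) = ρ g (f h) + f g with hIsCdef
  have hmemIsC : ∀ f : G → (I → ℤ) × ℤ,
      f ∈ cocycles₁ (Rep.of ρ) ↔ IsC f := fun f =>
    mem_cocycles₁_iff (A := Rep.of ρ) f
  -- second components of cocycles vanish
  have hsnd0 : ∀ f, IsC f → ∀ σ, (f σ).2 = 0 := by
    intro f hf σ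
    refine vanish (fun g => (f g).2) Set.univ (by simp) ?_ σ (Set.mem_univ σ)
    intro a _ b _
    show (f (a * b)).2 = (f a).2 + (f b).2
    rw [hf a b]
    show (ρ a (f b)).2 + (f a).2 = _
    rw [hρ_snd]
    ring
  -- main pointwise cocycle relation
  have hcoc : ∀ f, IsC f → ∀ (σ τ : G) (j : I),
      (f (σ * τ)).1 j = (f σ).1 j + E σ * (f τ).1 (σ⁻¹ • j) := by
    intro f hf σ τ j
    have h1 : (f (σ * τ)).1 j = (ρ σ (f τ)).1 j + (f σ).1 j := by rw [hf σ τ]; rfl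
    by_cases hσ : σ ∈ N
    · rw [h1, hfstN σ hσ]
      simp only [hEdef, if_pos hσ]
      ring
    · rw [h1, hfstO σ hσ, hsnd0 f hf τ]
      simp only [hEdef, if_neg hσ]
      ring
  -- values on the stabilizer
  have hstabN : ∀ f, IsC f → ∀ i : I, ∀ g : G, g • i = i → g ∈ N → (f g).1 i = 0 := by
    intro f hf i g hgi hgN
    refine vanish (fun g => (f g).1 i) {g : G | g • i = i ∧ g ∈ N} ?_ ?_ g ⟨hgi, hgN⟩
    · rintro a ⟨ha1, ha2⟩ b ⟨hb1, hb2⟩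
      exact ⟨by rw [mul_smul, hb1, ha1], mul_mem ha2 hb2⟩
    · rintro a ⟨ha1, ha2⟩ b ⟨hb1, hb2⟩
      have hainv : a⁻¹ • i = i := inv_smul_eq_iff.mpr ha1.symm
      show (f (a * b)).1 i = (f a).1 i + (f b).1 i
      rw [hcoc f hf a b i, hainv]
      simp [hEdef, ha2]
  have hstabO : ∀ f, IsC f → ∀ i : I, ∀ g₁ g₂ : G, g₁ • i = i → g₂ • i = i →
      g₁ ∉ N → g₂ ∉ N → (f g₁).1 i = (f g₂).1 i := by
    intro f hf i g₁ g₂ h1 h2 hn1 hn2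
    have hmem : g₁⁻¹ * g₂ ∈ N := by
      rw [hmul2]
      simp [hn1, hn2]
    have hfix : (g₁⁻¹ * g₂) • i = i := by
      rw [mul_smul, h2]
      exact inv_smul_eq_iff.mpr h1.symm
    have h0 : (f (g₁⁻¹ * g₂)).1 i = 0 := hstabN f hf i _ hfix hmem
    have hch := hcoc f hf g₁ (g₁⁻¹ * g₂) i
    rw [mul_inv_cancel_left] at hch
    have hinv : g₁⁻¹ • i = i := inv_smul_eq_iff.mpr h1.symm
    rw [hinv, h0] at hch
    rw [hch]
    ring
  -- orbit and choice data
  have hmk : ∀ (σ : G) (j : I), (⟦σ • j⟧ : Ω) = ⟦j⟧ :=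
    fun σ j => Quotient.sound (MulAction.mem_orbit j σ)
  have horb : ∀ j : I, j ∈ MulAction.orbit G ((⟦j⟧ : Ω).out) := by
    intro j
    have h := Quotient.mk_out (s := MulAction.orbitRel G I) j
    exact MulAction.orbitRel_apply.mp ((MulAction.orbitRel G I).symm h)
  have hsel' : ∀ j : I, ∃ σ, σ ∈ N ∧ σ • ((⟦j⟧ : Ω).out) = j := by
    intro j
    obtain ⟨σ, h1, h2⟩ := htrans _ j (horb j)
    exact ⟨σ, h1, h2⟩
  choose σsel hσselN hσsel using hsel'
  have hhsel' : ∀ O : Ω, ∃ h, h ∉ N ∧ h • O.out = O.out := by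
    intro O
    obtain ⟨n, hn1, hn2⟩ := htrans O.out (g₀ • O.out) (MulAction.mem_orbit _ g₀)
    refine ⟨n⁻¹ * g₀, ?_, by rw [mul_smul, ← hn2, inv_smul_smul]⟩
    intro hmem
    exact hg₀ (by simpa using mul_mem hn1 hmem)
  choose hsel hselN hselfix using hhsel'
  -- the construction: any cocycle with all invariants even is a coboundary
  have construct : ∀ f, IsC f →
      (∀ O : Ω, Even ((f (hsel O)).1 O.out)) →
      ∃ x : (I → ℤ) × ℤ, ∀ σ, ρ σ x - x = f σ := by
    intro f hf heven
    have hsnd := hsnd0 f hf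
    choose m hm using heven
    set v : I → ℤ := fun j => -(m ⟦j⟧) - (f (σsel j)).1 j with hvdef
    have key : ∀ (σ : G) (j : I), (f σ).1 j = E σ * v (σ⁻¹ • j) - v j := by
      intro σ j
      set O : Ω := ⟦j⟧ with hOdef
      set i : I := O.out with hidef
      set τ : G := σsel j with hτdef
      have hτN : τ ∈ N := hσselN j
      have hτi : τ • i = j := hσsel j
      set τ' : G := σsel (σ⁻¹ • j) with hτ'def
      have hτ'N : τ' ∈ N := hσselN (σ⁻¹ • j)
      have hOeq : (⟦σ⁻¹ • j⟧ : Ω) = O := hmk σ⁻¹ j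
      have hτ'i : τ' • i = σ⁻¹ • j := by
        have h := hσsel (σ⁻¹ • j)
        rwa [hOeq] at h
      have hvj : v j = -(m O) - (f τ).1 j := rfl
      have hvj' : v (σ⁻¹ • j) = -(m O) - (f τ').1 (σ⁻¹ • j) := by
        show -(m ⟦σ⁻¹ • j⟧) - (f (σsel (σ⁻¹ • j))).1 (σ⁻¹ • j) = _
        rw [hOeq]
      set h : G := (σ * τ')⁻¹ * τ with hhdef
      have hτfact : (σ * τ') * h = τ := by rw [hhdef, mul_inv_cancel_left]
      have hστ'j : (σ * τ') • i = j := by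
        rw [mul_smul, hτ'i, smul_inv_smul]
      have hhi : h • i = i := by
        rw [hhdef, mul_smul, hτi, ← hστ'j, inv_smul_smul]
      have hchain : (f τ).1 j
          = (f σ).1 j + E σ * (f τ').1 (σ⁻¹ • j) + E σ * (f h).1 i := by
        have e1 : (f τ).1 j = (f (σ * τ')).1 j + E (σ * τ') * (f h).1 ((σ * τ')⁻¹ • j) := by
          conv_lhs => rw [← hτfact]
          exact hcoc f hf (σ * τ') h j
        have e2 : (σ * τ')⁻¹ • j = i := by rw [← hστ'j, inv_smul_smul]
        have e3 : (f (σ * τ')).1 j = (f σ).1 j + E σ * (f τ').1 (σ⁻¹ • j) :=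
          hcoc f hf σ τ' j
        have e4 : E τ' = 1 := by simp [hEdef, hτ'N]
        rw [e1, e2, e3, hE_mul, e4]
        ring
      by_cases hσ : σ ∈ N
      · -- E σ = 1, h ∈ N, (f h).1 i = 0
        have hEσ : E σ = 1 := by simp [hEdef, hσ]
        have hστ'N : σ * τ' ∈ N := mul_mem hσ hτ'N
        have hhN : h ∈ N := by
          rw [hhdef]
          exact mul_mem (inv_mem hστ'N) hτN
        have h0 : (f h).1 i = 0 := hstabN f hf i h hhi hhN
        rw [hEσ] at hchain
        rw [hEσ, hvj, hvj']
        rw [h0] at hchain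
        linarith [hchain]
      · -- E σ = -1, h ∉ N
        have hEσ : E σ = -1 := by simp [hEdef, hσ]
        have hστ' : σ * τ' ∉ N := by
          intro hmem
          have hx : (σ * τ') * τ'⁻¹ ∈ N := mul_mem hmem (inv_mem hτ'N)
          rw [mul_inv_cancel_right] at hx
          exact hσ hx
        have hhO : h ∉ N := by
          intro hmem
          have hx : τ * h⁻¹ ∈ N := mul_mem hτN (inv_mem hmem)
          rw [← hτfact, mul_inv_cancel_right] at hx
          exact hστ' hx
        have hOout : (f h).1 i = (f (hsel O)).1 O.out :=
          hstabO f hf i h (hsel O) hhi (hselfix O) hhO (hselN O)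
        have h2m : (f h).1 i = m O + m O := hOout.trans (hm O)
        rw [hEσ] at hchain
        rw [hEσ, hvj, hvj']
        linarith [hchain, h2m]
    refine ⟨(v, 0), ?_⟩
    intro σ
    have hs : (ρ σ (v, (0 : ℤ)) - (v, (0 : ℤ))).2 = (f σ).2 := by
      show (ρ σ (v, (0 : ℤ))).2 - 0 = (f σ).2
      rw [hρ_snd, hsnd σ]
      rfl
    have hft : (ρ σ (v, (0 : ℤ)) - (v, (0 : ℤ))).1 = (f σ).1 := by
      funext j
      show (ρ σ (v, (0 : ℤ))).1 j - v j = (f σ).1 j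
      by_cases hσ : σ ∈ N
      · rw [hfstN σ hσ, key σ j]
        show v (σ⁻¹ • j) - v j = _
        simp [hEdef, hσ]
      · rw [hfstO σ hσ, key σ j]
        show -v (σ⁻¹ • j) - 0 - v j = _
        simp only [hEdef, if_neg hσ]
        ring
    exact Prod.ext hft hs
  -- enumeration of orbits
  have hIne : Nonempty I := by
    rw [← Fintype.card_pos_iff, hr]
    rcases hodd with ⟨k, hk⟩
    omega
  have hΩfin : Finite Ω := Quotient.finite _
  have hΩne : Nonempty Ω := Nonempty.map (fun j => (⟦j⟧ : Ω)) hIne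
  have hr'pos : 0 < r' := by
    rw [← hr']
    exact Nat.card_pos
  let e : Ω ≃ Fin r' := Finite.equivFinOfCardEq hr'
  let lastIdx : Fin r' := ⟨r' - 1, by omega⟩
  let Olast : Ω := e.symm lastIdx
  let emb : Fin (r' - 1) → Ω := fun k => e.symm (Fin.castLE (by omega) k)
  -- the invariant map
  set φ : (G → (I → ℤ) × ℤ) → Ω → ℤ := fun f O => (f (hsel O)).1 O.out with hφdef
  set F0 : (G → (I → ℤ) × ℤ) → (Fin (r' - 1) → ZMod 2) :=
    fun f k => ((φ f (emb k) : ℤ) : ZMod 2) + ((φ f Olast : ℤ) : ZMod 2) with hF0def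
  have hφadd : ∀ (f g : G → (I → ℤ) × ℤ) (O : Ω), φ (f + g) O = φ f O + φ g O :=
    fun f g O => rfl
  -- kernel lemma, raw version, forward direction
  have kerlem1 : ∀ f : G → (I → ℤ) × ℤ, IsC f → (∀ k, F0 f k = 0) →
      ∃ x : (I → ℤ) × ℤ, ∀ σ, ρ σ x - x = f σ := by
    intro f hf hFf
    have hall : ∀ O : Ω, ((φ f O : ℤ) : ZMod 2) = ((φ f Olast : ℤ) : ZMod 2) := by
      intro O
      by_cases hO : O = Olast
      · rw [hO]
      · have hval : (e O).val < r' - 1 := by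
          have h1 : (e O).val < r' := (e O).2
          have h2 : e O ≠ lastIdx := by
            intro hc
            exact hO (by rw [← e.symm_apply_apply O, hc])
          have h3 : (e O).val ≠ r' - 1 := fun hc => h2 (Fin.ext hc)
          omega
        have hembk : emb ⟨(e O).val, hval⟩ = O := by
          show e.symm _ = O
          rw [show Fin.castLE (by omega : r' - 1 ≤ r') ⟨(e O).val, hval⟩ = e O from
            Fin.ext rfl]
          exact e.symm_apply_apply O
        have hzero : ((φ f (emb ⟨(e O).val, hval⟩) : ℤ) : ZMod 2)
            + ((φ f Olast : ℤ) : ZMod 2) = 0 := hFf ⟨(e O).val, hval⟩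
        rw [hembk] at hzero
        rw [← CharTwo.neg_eq (((φ f Olast : ℤ) : ZMod 2))]
        exact eq_neg_of_add_eq_zero_left hzero
    set c₀ : ℤ := φ f Olast with hc₀def
    set x₀ : (I → ℤ) × ℤ := ((0 : I → ℤ), -c₀) with hx₀def
    set g : G → (I → ℤ) × ℤ := fun σ => f σ - (ρ σ x₀ - x₀) with hgdef
    have hgC : IsC g := by
      intro a b
      show f (a * b) - (ρ (a * b) x₀ - x₀)
        = ρ a (f b - (ρ b x₀ - x₀)) + (f a - (ρ a x₀ - x₀))
      rw [hf a b, map_sub, map_sub]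
      have hmulx : ρ (a * b) x₀ = ρ a (ρ b x₀) := by rw [map_mul]; rfl
      rw [hmulx]
      abel
    have hgeven : ∀ O : Ω, Even ((g (hsel O)).1 O.out) := by
      intro O
      have hfix : (hsel O)⁻¹ • O.out = O.out := inv_smul_eq_iff.mpr (hselfix O).symm
      have hval : (g (hsel O)).1 O.out = φ f O - c₀ := by
        have h1 : (g (hsel O)).1 O.out
            = (f (hsel O)).1 O.out - ((ρ (hsel O) x₀).1 O.out - x₀.1 O.out) := rfl
        rw [h1, hfstO _ (hselN O), hfix]
        show (f (hsel O)).1 O.out - (-(0 : ℤ) - -c₀ - 0) = (f (hsel O)).1 O.out - c₀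
        ring
      rw [hval]
      have hcast : ((φ f O - c₀ : ℤ) : ZMod 2) = 0 := by
        push_cast
        rw [hall O]
        ring
      rw [ZMod.intCast_zmod_eq_zero_iff_dvd] at hcast
      exact even_iff_two_dvd.mpr hcast
    obtain ⟨x', hx'⟩ := construct g hgC hgeven
    refine ⟨x' + x₀, ?_⟩
    intro σ
    have h2 : ρ σ x' - x' = f σ - (ρ σ x₀ - x₀) := hx' σ
    rw [map_add]
    have hre : ρ σ x' + ρ σ x₀ - (x' + x₀) = (ρ σ x' - x') + (ρ σ x₀ - x₀) := by abel
    rw [hre, h2]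
    abel
  -- kernel lemma, raw version, backward direction
  have kerlem2 : ∀ f : G → (I → ℤ) × ℤ,
      (∃ x : (I → ℤ) × ℤ, ∀ σ, ρ σ x - x = f σ) → ∀ k, F0 f k = 0 := by
    intro f hf k
    obtain ⟨x, hx⟩ := hf
    have hφ : ∀ O : Ω, φ f O = -(2 * x.1 O.out) - x.2 := by
      intro O
      have hfix : (hsel O)⁻¹ • O.out = O.out := inv_smul_eq_iff.mpr (hselfix O).symm
      have h1 : (f (hsel O)).1 O.out = (ρ (hsel O) x).1 O.out - x.1 O.out := by
        rw [← hx (hsel O)]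
        rfl
      show (f (hsel O)).1 O.out = _
      rw [h1, hfstO _ (hselN O), hfix]
      ring
    show ((φ f (emb k) : ℤ) : ZMod 2) + ((φ f Olast : ℤ) : ZMod 2) = 0
    rw [hφ, hφ]
    have : ((-(2 * x.1 (emb k).out) - x.2 + (-(2 * x.1 Olast.out) - x.2) : ℤ) : ZMod 2) = 0 := by
      rw [ZMod.intCast_zmod_eq_zero_iff_dvd]
      refine ⟨-(x.1 (emb k).out) - x.2 - x.1 Olast.out, by ring⟩
    rw [← this]
    push_cast
    ring
  -- the linear map F on cocycles
  let F0hom : cocycles₁ (Rep.of ρ) →+ (Fin (r' - 1) → ZMod 2) :=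
    { toFun := fun f => F0 f
      map_zero' := by
        funext k
        show ((φ 0 (emb k) : ℤ) : ZMod 2) + ((φ 0 Olast : ℤ) : ZMod 2) = 0
        show (((0 : ℤ)) : ZMod 2) + (((0 : ℤ)) : ZMod 2) = 0
        norm_num
      map_add' := by
        intro f g
        funext k
        show ((φ (↑f + ↑g) (emb k) : ℤ) : ZMod 2) + ((φ (↑f + ↑g) Olast : ℤ) : ZMod 2) = _
        rw [hφadd, hφadd]
        push_cast
        show _ = (((φ (↑f) (emb k) : ℤ) : ZMod 2) + ((φ (↑f) Olast : ℤ) : ZMod 2))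
          + (((φ (↑g) (emb k) : ℤ) : ZMod 2) + ((φ (↑g) Olast : ℤ) : ZMod 2))
        ring }
  let Flin : cocycles₁ (Rep.of ρ) →ₗ[ℤ] (Fin (r' - 1) → ZMod 2) := F0hom.toIntLinearMap
  have hFlin_apply : ∀ f : cocycles₁ (Rep.of ρ), Flin f = F0 f := fun f => rfl
  -- kernel identification
  have hker : LinearMap.ker Flin = LinearMap.ker (H1π (Rep.of ρ)).hom := by
    ext f
    constructor
    · intro hf
      have hFf : ∀ k, F0 (f : G → (I → ℤ) × ℤ) k = 0 := by
        intro k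
        have hz : Flin f = 0 := hf
        exact congrFun hz k
      have hfC : IsC (f : G → (I → ℤ) × ℤ) := (hmemIsC _).mp f.2
      obtain ⟨x, hx⟩ := kerlem1 _ hfC hFf
      rw [LinearMap.mem_ker]
      show H1π (Rep.of ρ) f = 0
      rw [H1π_eq_zero_iff]
      exact ⟨x, funext hx⟩
    · intro hf
      rw [LinearMap.mem_ker] at hf
      change H1π (Rep.of ρ) f = 0 at hf
      rw [H1π_eq_zero_iff] at hf
      obtain ⟨x, hx⟩ := hf
      have hFf : ∀ k, F0 (f : G → (I → ℤ) × ℤ) k = 0 :=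
        kerlem2 _ ⟨x, fun σ => congrFun hx σ⟩
      show Flin f = 0
      funext k
      exact hFf k
  -- surjectivity
  have hsurjF : Function.Surjective Flin := by
    intro a
    set c : Ω → ℤ := fun O => if h : e O = lastIdx then 0 else ((a ⟨(e O).val, by
      have h1 : (e O).val < r' := (e O).2
      have h3 : (e O).val ≠ r' - 1 := fun hc => h (Fin.ext hc)
      omega⟩).val : ℤ) with hcdef
    set fc : G → (I → ℤ) × ℤ :=
      fun σ => ((fun j => if σ ∈ N then 0 else c ⟦j⟧), 0) with hfcdef
    have hfcC : IsC fc := by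
      intro g h
      have hs : (fc (g * h)).2 = (ρ g (fc h) + fc g).2 := by
        show (0 : ℤ) = (ρ g (fc h)).2 + 0
        rw [hρ_snd]
        rfl
      have hfst : (fc (g * h)).1 = (ρ g (fc h) + fc g).1 := by
        funext j
        show (if g * h ∈ N then 0 else c ⟦j⟧)
          = (ρ g (fc h)).1 j + (if g ∈ N then 0 else c ⟦j⟧)
        have hmkj : (⟦g⁻¹ • j⟧ : Ω) = ⟦j⟧ := hmk g⁻¹ j
        by_cases hg : g ∈ N
        · rw [hfstN g hg]
          show _ = (if h ∈ N then 0 else c ⟦g⁻¹ • j⟧) + _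
          rw [hmkj]
          by_cases hh : h ∈ N
          · have hgh : g * h ∈ N := hmul2.mpr (by simp [hg, hh])
            simp [hgh, hg, hh]
          · have hgh : g * h ∉ N := fun hc => hh (by have := hmul2.mp hc; tauto)
            simp [hgh, hg, hh]
        · rw [hfstO g hg]
          show _ = -(if h ∈ N then 0 else c ⟦g⁻¹ • j⟧) - (fc h).2 + _
          rw [hmkj]
          show _ = -(if h ∈ N then 0 else c ⟦j⟧) - 0 + _
          by_cases hh : h ∈ N
          · have hgh : g * h ∉ N := fun hc => hg (by have := hmul2.mp hc; tauto)
            simp [hgh, hg, hh]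
          · have hgh : g * h ∈ N := hmul2.mpr (by tauto)
            simp [hgh, hg, hh]
      exact Prod.ext hfst hs
    refine ⟨⟨fc, (hmemIsC fc).mpr hfcC⟩, ?_⟩
    have hφfc : ∀ O : Ω, φ fc O = c O := by
      intro O
      show (if hsel O ∈ N then 0 else c ⟦O.out⟧) = c O
      rw [if_neg (hselN O), Quotient.out_eq]
    funext k
    show ((φ fc (emb k) : ℤ) : ZMod 2) + ((φ fc Olast : ℤ) : ZMod 2) = a k
    rw [hφfc, hφfc]
    have hclast : c Olast = 0 := by
      rw [hcdef]
      have he : e Olast = lastIdx := e.apply_symm_apply lastIdx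
      simp [he]
    have hcemb : c (emb k) = ((a k).val : ℤ) := by
      simp only [hcdef]
      have heemb : e (emb k) = Fin.castLE (by omega) k := e.apply_symm_apply _
      have hne : e (emb k) ≠ lastIdx := by
        rw [heemb]
        intro hc
        have hv : (k : ℕ) = r' - 1 := congrArg Fin.val hc
        have := k.2
        omega
      rw [dif_neg hne]
      have hval : (e (emb k)).val = (k : ℕ) := by rw [heemb]; rfl
      simp only [hval, Fin.eta]
    rw [hclast, hcemb]
    have hcastv : (((a k).val : ℤ) : ZMod 2) = a k := by
      push_cast
      exact ZMod.natCast_rightInverse (a k)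
    rw [hcastv]
    norm_num
  -- assemble the equivalence
  have hH1surj : Function.Surjective (H1π (Rep.of ρ)).hom := by
    intro y
    exact H1_induction_on y fun x => ⟨x, rfl⟩
  let e1 := (H1π (Rep.of ρ)).hom.quotKerEquivOfSurjective hH1surj
  let e2 := Flin.quotKerEquivOfSurjective hsurjF
  exact ⟨(e1.symm.trans ((Submodule.quotEquivOfEq _ _ hker.symm).trans e2)).toAddEquiv⟩
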